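/- For a finite group G and the canonical frame given by the PVM P(g) = |g⟩⟨g| on l²(G) with left regular representation, the relativization yen(A) = Σ_{g∈G} |g⟩⟨g| ⊗ U_S(g) A U_S(g)* of any bounded operator A on H_S is invariant under the diagonal action of G: (U_L(h) ⊗ U_S(h)) yen(A) (U_L(h) ⊗ U_S(h))* = yen(A) for all h ∈ G. -/

import Mathlib

open scoped Kronecker
open Matrix

/-- The relativization map for a finite group `G` with the canonical ideal frame
`P(g) = |g⟩⟨g|` on `l²(G)`:  `yen(A) = Σ_g |g⟩⟨g| ⊗ U_S(g) A U_S(g)*`. -/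
noncomputable def yen {G : Type*} [Group G] [Fintype G] [DecidableEq G]
    {n : Type*} [Fintype n] [DecidableEq n]
    (US : G →* Matrix.unitaryGroup n ℂ) (A : Matrix n n ℂ) :
    Matrix (G × n) (G × n) ℂ :=
  ∑ g : G, (Matrix.single g g (1 : ℂ)) ⊗ₖ
    ((US g : Matrix n n ℂ) * A * star (US g : Matrix n n ℂ))

/-- The left regular representation `U_L(h)|g⟩ = |hg⟩` of a finite group `G`,
as a permutation matrix on `l²(G)`. -/
noncomputable def UL {G : Type*} [Group G] [Fintype G] [DecidableEq G] (h : G) :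
    Matrix G G ℂ :=
  Matrix.of fun g g' => if g = h * g' then 1 else 0

/-- Conjugating a matrix by the permutation matrix `UL h` shifts indices by `h⁻¹`. -/
lemma UL_conj {G : Type*} [Group G] [Fintype G] [DecidableEq G] (h : G)
    (M : Matrix G G ℂ) (a b : G) :
    (UL h * M * star (UL h)) a b = M (h⁻¹ * a) (h⁻¹ * b) := by
  have h1 : ∀ x y : G, (x = h * y) ↔ (y = h⁻¹ * x) := by
    intro x y; constructor <;> rintro rfl <;> simp
  simp [UL, Matrix.mul_apply, Matrix.star_apply, h1, ite_mul, mul_ite,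
    Finset.sum_ite_eq', apply_ite (star : ℂ → ℂ)]

/-- `UL h * |g⟩⟨g| * (UL h)* = |hg⟩⟨hg|`. -/
lemma UL_conj_std {G : Type*} [Group G] [Fintype G] [DecidableEq G] (h g : G) :
    UL h * Matrix.single g g (1 : ℂ) * star (UL h) =
      Matrix.single (h * g) (h * g) (1 : ℂ) := by
  ext a b
  rw [UL_conj]
  simp [Matrix.single, eq_inv_mul_iff_mul_eq]

/-- the relativization `yen(A)` of any bounded operator `A` on `H_S` is
invariant under the diagonal action of `G`:
`(U_L(h) ⊗ U_S(h)) yen(A) (U_L(h) ⊗ U_S(h))* = yen(A)` for all `h ∈ G`. -/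
theorem yen_invariant {G : Type*} [Group G] [Fintype G] [DecidableEq G]
    {n : Type*} [Fintype n] [DecidableEq n]
    (US : G →* Matrix.unitaryGroup n ℂ) (h : G) (A : Matrix n n ℂ) :
    ((UL h) ⊗ₖ (US h : Matrix n n ℂ)) * yen US A *
        star ((UL h) ⊗ₖ (US h : Matrix n n ℂ)) = yen US A := by
  have hstar : star ((UL h) ⊗ₖ (US h : Matrix n n ℂ)) =
      (star (UL h)) ⊗ₖ (star (US h : Matrix n n ℂ)) := by
    ext ⟨a, b⟩ ⟨c, d⟩
    simp [Matrix.star_apply, mul_comm]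
  rw [hstar]
  unfold yen
  rw [Finset.mul_sum, Finset.sum_mul]
  have key : ∀ g : G,
      (UL h ⊗ₖ (US h : Matrix n n ℂ)) *
          ((Matrix.single g g (1 : ℂ)) ⊗ₖ
            ((US g : Matrix n n ℂ) * A * star (US g : Matrix n n ℂ))) *
          ((star (UL h)) ⊗ₖ (star (US h : Matrix n n ℂ))) =
        (Matrix.single (h * g) (h * g) (1 : ℂ)) ⊗ₖ
          ((US (h * g) : Matrix n n ℂ) * A * star (US (h * g) : Matrix n n ℂ)) := by
    intro g
    rw [← Matrix.mul_kronecker_mul, ← Matrix.mul_kronecker_mul, UL_conj_std]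
    have hc : (US (h * g) : Matrix n n ℂ) =
        (US h : Matrix n n ℂ) * (US g : Matrix n n ℂ) := by
      rw [_root_.map_mul]; rfl
    rw [hc, StarMul.star_mul]
    simp [mul_assoc]
  simp only [key]
  exact Fintype.sum_equiv (Equiv.mulLeft h) _ _ (fun g => rfl)
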